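/- Lemma (fairness needed in threshold step, DP case): For the dataset of six points in ℝ² × [4] × {0,1} given by (x,y,a) = ((1,0),1,0), ((2,0),1,0), ((3,1),1,1), ((4,1),1,1), ((5,0),2,0), ((6,0),2,0): the scoring function p₁(u₁,u₂)=u₁ satisfies empirical pairwise DP as a scoring function (the number of ordered cross-group pairs with s-value of the group-0 point larger equals the number with it smaller), yet the thresholded predictor with θ₁ = 4.5, θ₂ = θ₃ = 7 achieves MAE = 0 on this dataset but has empirical DPviol = 1/2. -/

import Mathlib

open Finset

/-- The six datapoints `(1,0),(2,0),(3,1),(4,1),(5,0),(6,0)` in `ℝ²`. -/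
noncomputable def lem2X : Fin 6 → ℝ × ℝ :=
  ![(1, 0), (2, 0), (3, 1), (4, 1), (5, 0), (6, 0)]

/-- Labels `1,1,1,1,2,2`. -/
def lem2Y : Fin 6 → ℕ := ![1, 1, 1, 1, 2, 2]

/-- Groups `0,0,1,1,0,0`. -/
def lem2A : Fin 6 → ℕ := ![0, 0, 1, 1, 0, 0]

/-- Threshold predictor with thresholds `θ₁ = 4.5`, `θ₂ = θ₃ = 7` applied to the
first-coordinate scoring function `p₁`. -/
noncomputable def lem2F (i : Fin 6) : ℕ :=
  if (lem2X i).1 ≤ 4.5 then 1 else if (lem2X i).1 ≤ 7 then 2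
  else if (lem2X i).1 ≤ 7 then 3 else 4

/-- Lemma (fairness needed in the threshold step, DP case): on the dataset above,
the scoring function `p₁(u) = u₁` satisfies empirical pairwise DP (equal counts of
cross-group ordered pairs with larger/smaller score), and the thresholded predictor
with `θ₁ = 4.5, θ₂ = θ₃ = 7` has MAE `0` but empirical DP violation `1/2`. -/
theorem fairness_needed_in_threshold_step_DP :
    -- the scoring function p₁ satisfies empirical pairwise DP
    (univ.filter (fun p : Fin 6 × Fin 6 =>
        lem2A p.1 = 0 ∧ lem2A p.2 = 1 ∧ (lem2X p.2).1 < (lem2X p.1).1)).card =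
      (univ.filter (fun p : Fin 6 × Fin 6 =>
        lem2A p.1 = 0 ∧ lem2A p.2 = 1 ∧ (lem2X p.1).1 < (lem2X p.2).1)).card ∧
    -- the thresholded predictor has MAE 0
    (∑ i, |(lem2Y i : ℚ) - (lem2F i : ℚ)|) / 6 = 0 ∧
    -- but empirical DP violation 1/2
    |((univ.filter (fun p : Fin 6 × Fin 6 =>
          lem2A p.1 = 0 ∧ lem2A p.2 = 1 ∧ lem2F p.2 < lem2F p.1)).card : ℚ) /
        ((univ.filter (fun p : Fin 6 × Fin 6 =>
          lem2A p.1 = 0 ∧ lem2A p.2 = 1)).card : ℚ) -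
      ((univ.filter (fun p : Fin 6 × Fin 6 =>
          lem2A p.1 = 0 ∧ lem2A p.2 = 1 ∧ lem2F p.1 < lem2F p.2)).card : ℚ) /
        ((univ.filter (fun p : Fin 6 × Fin 6 =>
          lem2A p.1 = 0 ∧ lem2A p.2 = 1)).card : ℚ)| = 1 / 2 := by
  have hF : ∀ i, lem2F i = (![1,1,1,1,2,2] : Fin 6 → ℕ) i := by
    intro i; fin_cases i <;> norm_num [lem2F, lem2X]
  have h1 : (![(1, 0), (2, 0), (3, 1), (4, 1), (5, 0), (6, 0)] : Fin 6 → ℝ × ℝ) 5 = (6, 0) := rfl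
  have h2 : (![0, 0, 1, 1, 0, 0] : Fin 6 → ℕ) 5 = 0 := rfl
  have h3 : (![1, 1, 1, 1, 2, 2] : Fin 6 → ℕ) 5 = 2 := rfl
  refine ⟨?_, ?_, ?_⟩
  · simp only [Finset.card_filter, Fintype.sum_prod_type, Fin.sum_univ_six]
    norm_num [lem2X, lem2A, h1, h2, Matrix.cons_val_two, Matrix.cons_val_three, Matrix.cons_val_four, Matrix.vecHead, Matrix.vecTail]
  · simp only [Fin.sum_univ_six, hF]
    norm_num [lem2Y, h3]
  · simp only [Finset.card_filter, Fintype.sum_prod_type, Fin.sum_univ_six, hF]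
    norm_num [lem2A, h2, h3, Matrix.cons_val_two, Matrix.cons_val_three, Matrix.cons_val_four, Matrix.vecHead, Matrix.vecTail]
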